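/- For every n ≥ 2, any two vertices x, y of Q_n with opposite parities, and any edge f of Q_n with f ≠ xy, there exists a Hamiltonian path in Q_n joining x and y that contains the edge f. -/

import Mathlib

open SimpleGraph Finset

/-- The n-dimensional hypercube: vertices are 0/1 vectors, adjacent iff
Hamming distance is 1. -/
def cube (n : ℕ) : SimpleGraph (Fin n → ZMod 2) where
  Adj x y := hammingDist x y = 1
  symm := ⟨fun x y h => by simpa [hammingDist_comm] using h⟩
  loopless := ⟨fun x h => by simp [hammingDist_self] at h⟩

/-- Parity of a vertex: sum of coordinates mod 2. -/
def parity {n : ℕ} (u : Fin n → ZMod 2) : ZMod 2 := ∑ i, u i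

open Function

abbrev snocV {n : ℕ} (u : Fin n → ZMod 2) (c : ZMod 2) : Fin (n+1) → ZMod 2 := Fin.snoc u c

def updOne {n : ℕ} (u : Fin n → ZMod 2) (i : Fin n) : Fin n → ZMod 2 :=
  Function.update u i (u i + 1)

lemma z2_ne_iff {a b : ZMod 2} : a ≠ b ↔ b = a + 1 := by revert a b; decide
lemma z2_add_one_ne (a : ZMod 2) : a + 1 ≠ a := by revert a; decide
lemma z2_aa (a : ZMod 2) : a + 1 + 1 = a := by revert a; decide

lemma hammingDist_eq_sum {n : ℕ} (u v : Fin n → ZMod 2) :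
    hammingDist u v = ∑ i, if u i ≠ v i then 1 else 0 := by
  classical
  unfold hammingDist
  simp [Finset.card_filter]

lemma hammingDist_snoc {n : ℕ} (u v : Fin n → ZMod 2) (a b : ZMod 2) :
    hammingDist (snocV u a) (snocV v b) = hammingDist u v + if a = b then 0 else 1 := by
  classical
  rw [hammingDist_eq_sum, hammingDist_eq_sum, Fin.sum_univ_castSucc]
  simp [Fin.snoc_castSucc, Fin.snoc_last]

lemma hammingDist_perm {n : ℕ} (σ : Equiv.Perm (Fin n)) (u v : Fin n → ZMod 2) :
    hammingDist (u ∘ σ) (v ∘ σ) = hammingDist u v := by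
  unfold hammingDist
  exact Finset.card_nbij σ (fun a ha => by simpa using ha) (by intro a _ b _ h; exact σ.injective h)
    (by intro b hb; exact ⟨σ.symm b, by simpa using hb⟩)

lemma snocV_inj {n : ℕ} {c : ZMod 2} : Function.Injective (fun u : Fin n → ZMod 2 => snocV u c) := by
  intro u v h
  have := congrArg Fin.init h
  simpa [Fin.init_snoc] using this

lemma parity_snoc {n : ℕ} (u : Fin n → ZMod 2) (c : ZMod 2) :
    parity (snocV u c) = parity u + c := by
  unfold parity
  rw [Fin.sum_univ_castSucc]
  simp [Fin.snoc_castSucc, Fin.snoc_last]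

lemma parity_perm {n : ℕ} (σ : Equiv.Perm (Fin n)) (u : Fin n → ZMod 2) :
    parity (u ∘ σ) = parity u := by
  unfold parity
  exact Equiv.sum_comp σ u

lemma parity_updOne {n : ℕ} (u : Fin n → ZMod 2) (i : Fin n) :
    parity (updOne u i) = parity u + 1 := by
  unfold parity updOne
  rw [Finset.sum_update_of_mem (Finset.mem_univ i), ← Finset.add_sum_erase _ u (Finset.mem_univ i),
    Finset.sdiff_singleton_eq_erase]
  ring

lemma updOne_ne {n : ℕ} (u : Fin n → ZMod 2) (i : Fin n) : updOne u i ≠ u := by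
  intro h
  have := congrFun h i
  simp only [updOne, Function.update_self] at this
  exact z2_add_one_ne _ this

lemma cube_adj {n : ℕ} {u v : Fin n → ZMod 2} : (cube n).Adj u v ↔ hammingDist u v = 1 := Iff.rfl

lemma adj_updOne {n : ℕ} (u : Fin n → ZMod 2) (i : Fin n) : (cube n).Adj u (updOne u i) := by
  rw [cube_adj, hammingDist_eq_sum]
  rw [Finset.sum_eq_single i]
  · simp [updOne, z2_add_one_ne]
  · intro j _ hj; simp [updOne, Function.update_of_ne hj]
  · simp

lemma adj_iff_updOne {n : ℕ} {u v : Fin n → ZMod 2} :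
    (cube n).Adj u v ↔ ∃ i, v = updOne u i := by
  constructor
  · intro h
    rw [cube_adj] at h
    unfold hammingDist at h
    rw [Finset.card_eq_one] at h
    obtain ⟨i, hi⟩ := h
    refine ⟨i, funext fun j => ?_⟩
    by_cases hj : j = i
    · subst hj
      have : u j ≠ v j := by
        have : j ∈ ({j} : Finset (Fin n)) := Finset.mem_singleton_self j
        rw [← hi] at this
        simpa using this
      simp only [updOne, Function.update_self]
      exact z2_ne_iff.mp this
    · have : j ∉ ({i} : Finset (Fin n)) := by simpa using hj
      rw [← hi] at this
      simp only [Finset.mem_filter, Finset.mem_univ, true_and] at this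
      push_neg at this
      rw [updOne, Function.update_of_ne hj]
      exact this.symm
  · rintro ⟨i, rfl⟩; exact adj_updOne u i

lemma parity_ne_of_adj {n : ℕ} {u v : Fin n → ZMod 2} (h : (cube n).Adj u v) :
    parity u ≠ parity v := by
  obtain ⟨i, rfl⟩ := adj_iff_updOne.mp h
  rw [parity_updOne]
  exact fun h => z2_add_one_ne _ h.symm

lemma eq_of_adj_of_ne {n : ℕ} {u v : Fin n → ZMod 2} (h : (cube n).Adj u v) {j : Fin n}
    (hj : u j ≠ v j) {i : Fin n} (hij : i ≠ j) : u i = v i := by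
  obtain ⟨k, rfl⟩ := adj_iff_updOne.mp h
  have hkj : k = j := by
    by_contra hk
    rw [updOne, Function.update_of_ne (Ne.symm hk)] at hj
    exact hj rfl
  subst hkj
  rw [updOne, Function.update_of_ne hij]


section WalkUtil
variable {V : Type*} {G : SimpleGraph V}

lemma splice {x y : V} (w : G.Walk x y) (a b : V) (h : s(a,b) ∈ w.edges) :
    ∃ a' b', s(a',b') = s(a,b) ∧ ∃ (p : G.Walk x a') (q : G.Walk b' y),
      w.support = p.support ++ q.support ∧ w.edges = p.edges ++ s(a',b') :: q.edges := by
  induction w with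
  | nil => simp at h
  | @cons X X₁ Y hadj w' ih =>
    rw [Walk.edges_cons, List.mem_cons] at h
    rcases h with h | h
    · exact ⟨X, X₁, h.symm, Walk.nil, w', by simp, by simp⟩
    · obtain ⟨a', b', heq, p, q, hs, he⟩ := ih h
      exact ⟨a', b', heq, Walk.cons hadj p, q, by simp [hs], by simp [he]⟩

lemma exists_mem_ne {α : Type*} {l : List α} (hl : l.Nodup) (h2 : 2 ≤ l.length) (t : α) :
    ∃ e ∈ l, e ≠ t := by
  match l, hl, h2 with
  | a :: b :: l, hl, _ =>
    by_cases hat : a = t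
    · refine ⟨b, by simp, ?_⟩
      subst hat
      have : a ∉ b :: l := (List.nodup_cons.mp hl).1
      intro hbt; exact this (hbt ▸ (by simp))
    · exact ⟨a, by simp, hat⟩

lemma glue_support {x a a'' b'' b y : V} (p : G.Walk x a) (q : G.Walk b y) (r : G.Walk a'' b'')
    (h1 : G.Adj a a'') (h2 : G.Adj b'' b) :
    (p.append (Walk.cons h1 (r.append (Walk.cons h2 q)))).support
      = p.support ++ r.support ++ q.support ∧
    (p.append (Walk.cons h1 (r.append (Walk.cons h2 q)))).edges
      = p.edges ++ s(a,a'') :: (r.edges ++ s(b'',b) :: q.edges) := by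
  constructor
  · rw [Walk.support_append, Walk.support_cons, List.tail_cons, Walk.support_append,
      Walk.support_cons, List.tail_cons, List.append_assoc]
  · rw [Walk.edges_append, Walk.edges_cons, Walk.edges_append, Walk.edges_cons]

end WalkUtil


def walkOfFn {V : Type*} {G : SimpleGraph V} :
    ∀ {m : ℕ} (g : Fin (m+1) → V), (∀ i : Fin m, G.Adj (g i.castSucc) (g i.succ)) →
      G.Walk (g 0) (g (Fin.last m))
  | 0, g, _ => Walk.nil.copy rfl (by norm_num [Fin.last])
  | m+1, g, h =>
    (Walk.cons (by simpa using h 0)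
      ((walkOfFn (fun i => g i.succ) (fun i => by
          show G.Adj (g i.castSucc.succ) (g i.succ.succ); rw [Fin.succ_castSucc]; exact h i.succ)).copy (by simp) (by simp [Fin.succ_last])))

lemma walkOfFn_support {V : Type*} {G : SimpleGraph V} :
    ∀ {m : ℕ} (g : Fin (m+1) → V) (h : ∀ i : Fin m, G.Adj (g i.castSucc) (g i.succ)),
      (walkOfFn g h).support = List.ofFn g
  | 0, g, h => by simp [walkOfFn, List.ofFn_succ]
  | m+1, g, h => by
    rw [walkOfFn]; erw [Walk.support_cons, Walk.support_copy]; rw [walkOfFn_support]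
    rw [List.ofFn_succ (f := g)]

lemma walkOfFn_edges {V : Type*} {G : SimpleGraph V} :
    ∀ {m : ℕ} (g : Fin (m+1) → V) (h : ∀ i : Fin m, G.Adj (g i.castSucc) (g i.succ)),
      (walkOfFn g h).edges = List.ofFn (fun i : Fin m => s(g i.castSucc, g i.succ))
  | 0, g, h => by simp [walkOfFn]
  | m+1, g, h => by
    rw [walkOfFn]; erw [Walk.edges_cons, Walk.edges_copy]; rw [walkOfFn_edges]
    rw [List.ofFn_succ (f := fun i : Fin (m+1) => s(g i.castSucc, g i.succ))]
    simp [Fin.succ_castSucc, -Fin.castSucc_succ]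

def homC {n : ℕ} (c : ZMod 2) : cube n →g cube (n+1) where
  toFun v := snocV v c
  map_rel' := by
    intro u v h
    rw [cube_adj] at *
    rw [hammingDist_snoc]
    simp [h]

lemma cross_adj {n : ℕ} (v : Fin n → ZMod 2) {c c' : ZMod 2} (h : c ≠ c') :
    (cube (n+1)).Adj (snocV v c) (snocV v c') := by
  rw [cube_adj, hammingDist_snoc]
  simp [h, hammingDist_self]

def liftW {n : ℕ} (c : ZMod 2) {a b : Fin n → ZMod 2} (w : (cube n).Walk a b) :
    (cube (n+1)).Walk (snocV a c) (snocV b c) := w.map (homC c)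

lemma liftW_support {n : ℕ} (c : ZMod 2) {a b : Fin n → ZMod 2} (w : (cube n).Walk a b) :
    (liftW c w).support = w.support.map (fun u => snocV u c) := by
  rw [liftW]; exact Walk.support_map _ _

lemma liftW_edges {n : ℕ} (c : ZMod 2) {a b : Fin n → ZMod 2} (w : (cube n).Walk a b) :
    (liftW c w).edges = w.edges.map (Sym2.map (fun u => snocV u c)) := by
  rw [liftW]; exact Walk.edges_map _ _

lemma count_map_snoc_same {n : ℕ} (c : ZMod 2) (l : List (Fin n → ZMod 2)) (a : Fin n → ZMod 2) :
    (l.map (fun u => snocV u c)).count (snocV a c) = l.count a :=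
  List.count_map_of_injective l _ snocV_inj a

lemma count_map_snoc_ne {n : ℕ} {c c' : ZMod 2} (h : c' ≠ c) (l : List (Fin n → ZMod 2))
    (a : Fin n → ZMod 2) : (l.map (fun u => snocV u c)).count (snocV a c') = 0 := by
  rw [List.count_eq_zero]
  intro hmem
  obtain ⟨b, _, hb⟩ := List.mem_map.mp hmem
  have := congrFun hb (Fin.last n)
  simp [Fin.snoc_last] at this
  exact h this.symm

def permIso {n : ℕ} (σ : Equiv.Perm (Fin n)) : cube n ≃g cube n where
  toEquiv := {
    toFun := fun v => v ∘ σ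
    invFun := fun v => v ∘ σ.symm
    left_inv := fun v => by funext i; simp
    right_inv := fun v => by funext i; simp }
  map_rel_iff' := by
    intro u v
    simp only [Equiv.coe_fn_mk]
    rw [cube_adj, cube_adj, hammingDist_perm]

lemma transfer {n : ℕ} (σ : Equiv.Perm (Fin n)) (x y : Fin n → ZMod 2)
    (f : Sym2 (Fin n → ZMod 2))
    (h : ∃ w : (cube n).Walk (x ∘ σ) (y ∘ σ), w.IsHamiltonian ∧ Sym2.map (· ∘ σ) f ∈ w.edges) :
    ∃ w : (cube n).Walk x y, w.IsHamiltonian ∧ f ∈ w.edges := by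
  obtain ⟨w, hw, hfw⟩ := h
  have hx : (permIso σ.symm) (x ∘ σ) = x := by funext i; simp [permIso]
  have hy : (permIso σ.symm) (y ∘ σ) = y := by funext i; simp [permIso]
  refine ⟨(w.map (permIso σ.symm).toHom).copy hx hy, ?_, ?_⟩
  · intro v
    rw [Walk.support_copy]
    exact hw.map _ (permIso σ.symm).toEquiv.bijective v
  · rw [Walk.edges_copy, Walk.edges_map]
    have hid : Sym2.map (⇑(permIso σ.symm)) (Sym2.map (· ∘ σ) f) = f := by
      rw [Sym2.map_map]
      have : (⇑(permIso σ.symm)) ∘ (· ∘ ⇑σ) = id := by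
        funext v; funext i; simp [permIso]
      rw [this, Sym2.map_id]
      rfl
    exact hid ▸ List.mem_map_of_mem (f := _) hfw

set_option maxRecDepth 1000000
set_option synthInstance.maxSize 2000
set_option synthInstance.maxHeartbeats 1000000
set_option maxHeartbeats 4000000

lemma base2 : ∀ x y u v : Fin 2 → ZMod 2, x 0 + x 1 ≠ y 0 + y 1 → hammingDist u v = 1 →
    s(u,v) ≠ s(x,y) → ∃ g : Fin 4 → (Fin 2 → ZMod 2), g 0 = x ∧ g 3 = y ∧
    (∀ i : Fin 3, hammingDist (g i.castSucc) (g i.succ) = 1) ∧ (∀ w, ∃ i, g i = w) ∧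
    (s(u,v) = s(g 0, g 1) ∨ s(u,v) = s(g 1, g 2) ∨ s(u,v) = s(g 2, g 3)) := by
  decide

def Pred (n : ℕ) : Prop := ∀ (x y : Fin n → ZMod 2), parity x ≠ parity y →
  ∀ f ∈ (cube n).edgeSet, f ≠ s(x, y) → ∃ w : (cube n).Walk x y, w.IsHamiltonian ∧ f ∈ w.edges

lemma pred_two : Pred 2 := by
  intro x y hp f hf hfxy
  induction f using Sym2.ind with
  | _ u v =>
  rw [mem_edgeSet] at hf
  have hd : hammingDist u v = 1 := cube_adj.mp hf
  have hpar : x 0 + x 1 ≠ y 0 + y 1 := by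
    have h1 : parity x = x 0 + x 1 := by unfold parity; rw [Fin.sum_univ_two]
    have h2 : parity y = y 0 + y 1 := by unfold parity; rw [Fin.sum_univ_two]
    rw [h1, h2] at hp; exact hp
  obtain ⟨g, hg0, hg3, hadj, hsurj, hmem⟩ := base2 x y u v hpar hd hfxy
  have hadj' : ∀ i : Fin 3, (cube 2).Adj (g i.castSucc) (g i.succ) := fun i => hadj i
  have hlast : g (Fin.last 3) = y := by
    have : Fin.last 3 = (3 : Fin 4) := by decide
    rw [this]; exact hg3
  refine ⟨(walkOfFn g hadj').copy hg0 hlast, ?_, ?_⟩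
  · intro v'
    rw [Walk.support_copy, walkOfFn_support]
    have hsur : Function.Surjective g := fun w => hsurj w
    have hinj : Function.Injective g :=
      ((Fintype.bijective_iff_surjective_and_card g).mpr ⟨hsur, by simp⟩).injective
    exact List.count_eq_one_of_mem ((List.nodup_ofFn).mpr hinj) (List.mem_ofFn.mpr (hsur v'))
  · rw [Walk.edges_copy, walkOfFn_edges]
    rw [List.mem_ofFn]
    have e0 : (Fin.castSucc (0 : Fin 3)) = (0 : Fin 4) := by decide
    have e1 : (Fin.succ (0 : Fin 3)) = (1 : Fin 4) := by decide
    have e2 : (Fin.castSucc (1 : Fin 3)) = (1 : Fin 4) := by decide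
    have e3 : (Fin.succ (1 : Fin 3)) = (2 : Fin 4) := by decide
    have e4 : (Fin.castSucc (2 : Fin 3)) = (2 : Fin 4) := by decide
    have e5 : (Fin.succ (2 : Fin 3)) = (3 : Fin 4) := by decide
    rcases hmem with h | h | h
    · exact ⟨0, by show s(g (Fin.castSucc 0), g (Fin.succ 0)) = s(u,v); rw [e0, e1]; exact h.symm⟩
    · exact ⟨1, by show s(g (Fin.castSucc 1), g (Fin.succ 1)) = s(u,v); rw [e2, e3]; exact h.symm⟩
    · exact ⟨2, by show s(g (Fin.castSucc 2), g (Fin.succ 2)) = s(u,v); rw [e4, e5]; exact h.symm⟩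


lemma sym2_snoc_ne {n : ℕ} (c : ZMod 2) {a b : Sym2 (Fin n → ZMod 2)} (h : a ≠ b) :
    Sym2.map (fun u => snocV u c) a ≠ Sym2.map (fun u => snocV u c) b :=
  fun he => h (Sym2.map.injective snocV_inj he)

lemma exists_edge_ne {n : ℕ} (hn : 2 ≤ n) (t : Sym2 (Fin n → ZMod 2)) :
    ∃ f ∈ (cube n).edgeSet, f ≠ t := by
  have h01 : (⟨0, by omega⟩ : Fin n) ≠ ⟨1, by omega⟩ := by
    intro h; simpa using congrArg Fin.val h
  set z : Fin n → ZMod 2 := fun _ => 0 with hz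
  set z1 := updOne z ⟨0, by omega⟩ with hz1
  set z2 := updOne z ⟨1, by omega⟩ with hz2
  have hne : s(z, z1) ≠ s(z, z2) := by
    intro h
    have : z1 = z2 := Sym2.congr_right.mp h
    have h0 : z1 ⟨0, by omega⟩ = z ⟨0, by omega⟩ + 1 := by
      rw [hz1]; simp [updOne]
    have h1 : z2 ⟨0, by omega⟩ = z ⟨0, by omega⟩ := by
      rw [hz2, updOne, Function.update_of_ne h01]
    rw [this, h1] at h0
    exact z2_add_one_ne _ h0.symm
  by_cases h : s(z, z1) = t
  · exact ⟨s(z, z2), ((cube n).mem_edgeSet).mpr (adj_updOne z _), by rw [← h]; exact hne.symm⟩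
  · exact ⟨s(z, z1), ((cube n).mem_edgeSet).mpr (adj_updOne z _), h⟩

lemma lace {n : ℕ} (hn : 2 ≤ n) (hP : Pred n) {x y : Fin n → ZMod 2}
    (hp : parity x ≠ parity y) : ∃ w : (cube n).Walk x y, w.IsHamiltonian := by
  obtain ⟨f, hf, hft⟩ := exists_edge_ne hn s(x, y)
  obtain ⟨w, hw, -⟩ := hP x y hp f hf hft
  exact ⟨w, hw⟩

lemma combine {n : ℕ} (C : ZMod 2) {x' y' A' B' : Fin n → ZMod 2}
    (p' : (cube n).Walk x' A') (q' : (cube n).Walk B' y')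
    (hsupp : ∀ v, (p'.support ++ q'.support).count v = 1)
    (R : (cube n).Walk A' B') (hR : R.IsHamiltonian) :
    ∃ W : (cube (n+1)).Walk (snocV x' C) (snocV y' C), W.IsHamiltonian ∧
      (∀ f' ∈ p'.edges, Sym2.map (fun u => snocV u C) f' ∈ W.edges) ∧
      (∀ f' ∈ q'.edges, Sym2.map (fun u => snocV u C) f' ∈ W.edges) ∧
      (∀ f' ∈ R.edges, Sym2.map (fun u => snocV u (C+1)) f' ∈ W.edges) := by
  have h1 : (cube (n+1)).Adj (snocV A' C) (snocV A' (C+1)) :=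
    cross_adj A' (z2_add_one_ne C).symm
  have h2 : (cube (n+1)).Adj (snocV B' (C+1)) (snocV B' C) :=
    cross_adj B' (z2_add_one_ne C)
  set W := (liftW C p').append (Walk.cons h1 ((liftW (C+1) R).append (Walk.cons h2 (liftW C q'))))
    with hW
  obtain ⟨hWs, hWe⟩ := glue_support (liftW C p') (liftW C q') (liftW (C+1) R) h1 h2
  refine ⟨W, ?_, ?_, ?_, ?_⟩
  · intro w
    rw [hW, hWs, liftW_support, liftW_support, liftW_support]
    conv_lhs => rw [← Fin.snoc_init_self w]
    rw [List.count_append, List.count_append]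
    by_cases hd : w (Fin.last n) = C
    · rw [hd, count_map_snoc_same, count_map_snoc_same,
        count_map_snoc_ne (z2_add_one_ne C).symm]
      have := hsupp (Fin.init w)
      rw [List.count_append] at this
      omega
    · have hd' : w (Fin.last n) = C + 1 := z2_ne_iff.mp (Ne.symm hd)
      rw [hd', count_map_snoc_ne (z2_add_one_ne C), count_map_snoc_ne (z2_add_one_ne C),
        count_map_snoc_same]
      have := hR (Fin.init w)
      omega
  · intro f' hf'
    rw [hW, hWe]
    refine List.mem_append.mpr (Or.inl ?_)
    rw [liftW_edges]
    exact List.mem_map_of_mem (f := _) hf'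
  · intro f' hf'
    rw [hW, hWe]
    refine List.mem_append.mpr (Or.inr ?_)
    refine List.mem_cons.mpr (Or.inr ?_)
    refine List.mem_append.mpr (Or.inr ?_)
    refine List.mem_cons.mpr (Or.inr ?_)
    rw [liftW_edges]
    exact List.mem_map_of_mem (f := _) hf'
  · intro f' hf'
    rw [hW, hWe]
    refine List.mem_append.mpr (Or.inr ?_)
    refine List.mem_cons.mpr (Or.inr ?_)
    refine List.mem_append.mpr (Or.inl ?_)
    rw [liftW_edges]
    exact List.mem_map_of_mem (f := _) hf'

lemma caseB {n : ℕ} (hn : 2 ≤ n) (hP : Pred n) (c : ZMod 2) {x' y' u' v' : Fin n → ZMod 2}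
    (huv : (cube n).Adj u' v') (hpar : parity x' = parity y') :
    ∃ W : (cube (n+1)).Walk (snocV x' c) (snocV y' (c+1)), W.IsHamiltonian ∧
      Sym2.map (fun u => snocV u c) s(u', v') ∈ W.edges := by
  have h01 : (⟨0, by omega⟩ : Fin n) ≠ ⟨1, by omega⟩ := by
    intro h; simpa using congrArg Fin.val h
  have hz : ∃ z, parity z = parity x' + 1 ∧ s(x', z) ≠ s(u', v') := by
    by_cases h : s(x', updOne x' ⟨0, by omega⟩) = s(u', v')
    · refine ⟨updOne x' ⟨1, by omega⟩, parity_updOne _ _, fun h2 => ?_⟩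
      rw [← h] at h2
      have heq : updOne x' ⟨1, by omega⟩ = updOne x' ⟨0, by omega⟩ := Sym2.congr_right.mp h2
      have h0 : updOne x' ⟨0, by omega⟩ ⟨0, by omega⟩ = x' ⟨0, by omega⟩ + 1 := by simp [updOne]
      have h1 : updOne x' ⟨1, by omega⟩ ⟨0, by omega⟩ = x' ⟨0, by omega⟩ := by
        rw [updOne, Function.update_of_ne h01]
      rw [heq, h0] at h1
      exact z2_add_one_ne _ h1
    · exact ⟨updOne x' ⟨0, by omega⟩, parity_updOne _ _, h⟩
  obtain ⟨z, hzp, hzs⟩ := hz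
  have hpxz : parity x' ≠ parity z := by
    rw [hzp]; exact fun h => z2_add_one_ne _ h.symm
  obtain ⟨P1, hP1, hfP1⟩ := hP x' z hpxz s(u', v') (((cube n).mem_edgeSet).mpr huv)
    (Ne.symm hzs)
  have hpzy : parity z ≠ parity y' := by
    rw [hzp, ← hpar]; exact fun h => z2_add_one_ne _ h
  obtain ⟨R, hR⟩ := lace hn hP hpzy
  have hcross : (cube (n+1)).Adj (snocV z c) (snocV z (c+1)) := cross_adj z (z2_add_one_ne c).symm
  refine ⟨(liftW c P1).append (Walk.cons hcross (liftW (c+1) R)), ?_, ?_⟩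
  · intro w
    rw [Walk.support_append, Walk.support_cons, List.tail_cons, liftW_support, liftW_support,
      List.count_append]
    conv_lhs => rw [← Fin.snoc_init_self w]
    by_cases hd : w (Fin.last n) = c
    · rw [hd, count_map_snoc_same, count_map_snoc_ne (z2_add_one_ne c).symm]
      have := hP1 (Fin.init w); omega
    · have hd' : w (Fin.last n) = c + 1 := z2_ne_iff.mp (Ne.symm hd)
      rw [hd', count_map_snoc_ne (z2_add_one_ne c), count_map_snoc_same]
      have := hR (Fin.init w); omega
  · rw [Walk.edges_append, List.mem_append]
    left
    rw [liftW_edges]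
    exact List.mem_map_of_mem (f := _) hfP1

lemma card_cube (n : ℕ) : Fintype.card (Fin n → ZMod 2) = 2 ^ n := by
  simp

lemma choose_split {n : ℕ} (hn : 2 ≤ n) {x' y' : Fin n → ZMod 2} (P : (cube n).Walk x' y')
    (hPham : P.IsHamiltonian) (t : Sym2 (Fin n → ZMod 2)) :
    ∃ (A' B' : Fin n → ZMod 2) (p' : (cube n).Walk x' A') (q' : (cube n).Walk B' y'),
      (cube n).Adj A' B' ∧ s(A', B') ≠ t ∧
      (∀ w, (p'.support ++ q'.support).count w = 1) ∧
      (∀ f', f' ∈ P.edges → f' ≠ s(A', B') → (f' ∈ p'.edges ∨ f' ∈ q'.edges)) := by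
  have hlen : 2 ≤ P.edges.length := by
    rw [Walk.length_edges, hPham.length_eq, card_cube]
    have : 2 ^ 2 ≤ 2 ^ n := Nat.pow_le_pow_right (by norm_num) hn
    omega
  obtain ⟨e', he'mem, he'ne⟩ := exists_mem_ne hPham.isPath.edges_nodup hlen t
  induction e' using Sym2.ind with
  | _ A B =>
  obtain ⟨A', B', hAB, p', q', hsup, hedg⟩ := splice P A B he'mem
  refine ⟨A', B', p', q', ?_, hAB ▸ he'ne, ?_, ?_⟩
  · exact ((cube n).mem_edgeSet).mp (P.edges_subset_edgeSet (hAB ▸ he'mem))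
  · intro w; rw [← hsup]; exact hPham w
  · intro f' hf' hfne
    rw [hedg] at hf'
    rcases List.mem_append.mp hf' with h | h
    · exact Or.inl h
    · rcases List.mem_cons.mp h with h | h
      · exact absurd h hfne
      · exact Or.inr h

lemma z2_parity1 : ∀ a b c : ZMod 2, a + c ≠ b + (c + 1) → a = b := by decide
lemma z2_parity2 : ∀ a b c : ZMod 2, a + (c + 1) ≠ b + c → b = a := by decide

lemma pred_step {n : ℕ} (hn : 2 ≤ n) (hP : Pred n) : Pred (n+1) := by
  have core : ∀ (x y u v : Fin (n+1) → ZMod 2), parity x ≠ parity y →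
      (cube (n+1)).Adj u v → u (Fin.last n) = v (Fin.last n) →
      s(u, v) ≠ s(x, y) → ∃ w : (cube (n+1)).Walk x y, w.IsHamiltonian ∧ s(u, v) ∈ w.edges := by
    intro x y u v hp huv hlast hne
    obtain ⟨u', cu, rfl⟩ : ∃ a b, u = snocV a b := ⟨_, _, (Fin.snoc_init_self u).symm⟩
    obtain ⟨v', cv, rfl⟩ : ∃ a b, v = snocV a b := ⟨_, _, (Fin.snoc_init_self v).symm⟩
    obtain ⟨x', cx, rfl⟩ : ∃ a b, x = snocV a b := ⟨_, _, (Fin.snoc_init_self x).symm⟩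
    obtain ⟨y', cy, rfl⟩ : ∃ a b, y = snocV a b := ⟨_, _, (Fin.snoc_init_self y).symm⟩
    simp only [Fin.snoc_last] at hlast
    rw [← hlast] at huv hne ⊢
    have huv' : (cube n).Adj u' v' := by
      rw [cube_adj] at huv ⊢
      rw [hammingDist_snoc] at huv
      simpa using huv
    rw [parity_snoc, parity_snoc] at hp
    have hmapuv : Sym2.map (fun t => snocV t cu) s(u', v') = s(snocV u' cu, snocV v' cu) :=
      Sym2.map_pair_eq _ _ _
    by_cases hcx : cx = cu <;> by_cases hcy : cy = cu
    · -- case a: both endpoints in the copy of f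
      subst cx; subst cy
      have hpar' : parity x' ≠ parity y' := fun h => hp (by rw [h])
      have hmapxy : Sym2.map (fun t => snocV t cu) s(x', y') = s(snocV x' cu, snocV y' cu) :=
        Sym2.map_pair_eq _ _ _
      have hfne' : s(u', v') ≠ s(x', y') := by
        intro h; apply hne; rw [← hmapuv, ← hmapxy, h]
      obtain ⟨P, hPham, hfP⟩ := hP x' y' hpar' s(u', v') (((cube n).mem_edgeSet).mpr huv') hfne'
      obtain ⟨A', B', p', q', hadjAB, hABne, hsupp1, hmem_split⟩ :=
        choose_split hn P hPham s(u', v')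
      obtain ⟨R, hR⟩ := lace hn hP (parity_ne_of_adj hadjAB)
      obtain ⟨W, hWham, hWp, hWq, hWr⟩ := combine cu p' q' hsupp1 R hR
      refine ⟨W, hWham, ?_⟩
      rw [← hmapuv]
      rcases hmem_split s(u', v') hfP (Ne.symm hABne) with h | h
      · exact hWp _ h
      · exact hWq _ h
    · -- case b: x with f, y in other copy
      subst cx
      have hcy' : cy = cu + 1 := z2_ne_iff.mp (Ne.symm hcy)
      subst hcy'
      have hpar' : parity x' = parity y' := z2_parity1 _ _ _ hp
      obtain ⟨W, hWham, hWe⟩ := caseB hn hP cu huv' hpar'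
      refine ⟨W, hWham, ?_⟩
      rw [← hmapuv]
      exact hWe
    · -- case c: y with f, x in other copy
      subst cy
      have hcx' : cx = cu + 1 := z2_ne_iff.mp (Ne.symm hcx)
      subst hcx'
      have hpar' : parity y' = parity x' := z2_parity2 _ _ _ hp
      obtain ⟨W, hWham, hWe⟩ := caseB hn hP cu huv' hpar'
      refine ⟨W.reverse, ?_, ?_⟩
      · intro w
        rw [Walk.support_reverse, List.count_reverse]
        exact hWham w
      · rw [Walk.edges_reverse, List.mem_reverse, ← hmapuv]
        exact hWe
    · -- case d: both in the other copy
      have hcx' : cx = cu + 1 := z2_ne_iff.mp (Ne.symm hcx)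
      have hcy' : cy = cu + 1 := z2_ne_iff.mp (Ne.symm hcy)
      subst hcx'; subst hcy'
      have hpar' : parity x' ≠ parity y' := fun h => hp (by rw [h])
      obtain ⟨Q, hQham⟩ := lace hn hP hpar'
      obtain ⟨A', B', p', q', hadjAB, hABne, hsupp1, -⟩ := choose_split hn Q hQham s(u', v')
      obtain ⟨R, hRham, hfR⟩ := hP A' B' (parity_ne_of_adj hadjAB) s(u', v')
        (((cube n).mem_edgeSet).mpr huv') (Ne.symm hABne)
      obtain ⟨W, hWham, hWp, hWq, hWr⟩ := combine (cu+1) p' q' hsupp1 R hRham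
      refine ⟨W, hWham, ?_⟩
      have hh := hWr s(u', v') hfR
      rw [z2_aa] at hh
      rw [← hmapuv]
      exact hh
  intro x y hp f hf hfxy
  induction f using Sym2.ind with
  | _ u v =>
  rw [SimpleGraph.mem_edgeSet] at hf
  by_cases hl : u (Fin.last n) = v (Fin.last n)
  · exact core x y u v hp hf hl hfxy
  · have h0n : (⟨0, by omega⟩ : Fin (n+1)) ≠ Fin.last n := by
      intro h
      have := congrArg Fin.val h
      simp [Fin.last] at this
      omega
    set σ : Equiv.Perm (Fin (n+1)) := Equiv.swap ⟨0, by omega⟩ (Fin.last n) with hσ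
    apply transfer σ
    have hmap : Sym2.map (· ∘ σ) s(u, v) = s(u ∘ σ, v ∘ σ) := Sym2.map_pair_eq _ _ _
    rw [hmap]
    apply core
    · rw [parity_perm, parity_perm]; exact hp
    · rw [cube_adj] at hf ⊢
      rw [hammingDist_perm]
      exact hf
    · show u (σ (Fin.last n)) = v (σ (Fin.last n))
      have hσl : σ (Fin.last n) = ⟨0, by omega⟩ := Equiv.swap_apply_right _ _
      rw [hσl]
      exact eq_of_adj_of_ne hf hl h0n
    · intro h
      apply hfxy
      have hinj : Function.Injective (fun w : Fin (n+1) → ZMod 2 => w ∘ σ) := by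
        intro a b hab
        funext i
        have := congrFun hab (σ.symm i)
        simpa using this
      have h2 : Sym2.map (fun w : Fin (n+1) → ZMod 2 => w ∘ σ) s(u, v)
          = Sym2.map (fun w : Fin (n+1) → ZMod 2 => w ∘ σ) s(x, y) := by
        rw [Sym2.map_pair_eq, Sym2.map_pair_eq]
        exact h
      exact Sym2.map.injective hinj h2

theorem main_cube : ∀ n, 2 ≤ n → Pred n := fun n hn =>
  Nat.le_induction pred_two (fun m hm ih => pred_step hm ih) n hn

theorem stmt1 (n : ℕ) (hn : 2 ≤ n) (x y : Fin n → ZMod 2)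
    (hp : parity x ≠ parity y)
    (f : Sym2 (Fin n → ZMod 2)) (hf : f ∈ (cube n).edgeSet) (hfxy : f ≠ s(x, y)) :
    ∃ w : (cube n).Walk x y, w.IsHamiltonian ∧ f ∈ w.edges :=
  main_cube n hn x y hp f hf hfxy
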